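/- For every three-qubit pure state ψ, the 3-tangle τ_ABS := 4·det ρ_A − C(ρ_AB)² − C(ρ_AS)² satisfies τ_ABS = C_a(ρ_AB)² + C_a(ρ_AS)² − 4·det ρ_A; that is, the excess of the squared CKW concurrence bound over the sum of squared concurrences equals the excess of the sum of squared concurrences of assistance over the squared concurrence C_{A(BS)}² = 4·det ρ_A. -/

import Mathlib

open Matrix Complex Kronecker Finset
open scoped ComplexOrder

noncomputable section

abbrev TwoQubitMat := Matrix (Fin 2 × Fin 2) (Fin 2 × Fin 2) ℂ

def sigmaY : Matrix (Fin 2) (Fin 2) ℂ := !![0, -Complex.I; Complex.I, 0]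

def spinFlip (ρ : TwoQubitMat) : TwoQubitMat :=
  (sigmaY ⊗ₖ sigmaY) * ρ.map (starRingEnd ℂ) * (sigmaY ⊗ₖ sigmaY)

def matSqrt {m : Type*} [Fintype m] [DecidableEq m] (M : Matrix m m ℂ) : Matrix m m ℂ :=
  open scoped Classical in
  if h : M.PosSemidef then
    h.1.eigenvectorUnitary.1 * diagonal ((↑) ∘ Real.sqrt ∘ h.1.eigenvalues) *
      (star h.1.eigenvectorUnitary : Matrix m m ℂ) else 0

def Rmat (ρ : TwoQubitMat) : TwoQubitMat :=
  matSqrt (matSqrt ρ * spinFlip ρ * matSqrt ρ)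

def CoA (ρ : TwoQubitMat) : ℝ := (Rmat ρ).trace.re

def lmin2 (M : Matrix (Fin 2) (Fin 2) ℂ) : ℝ :=
  if h : M.IsHermitian then min (h.eigenvalues 0) (h.eigenvalues 1) else 0

def maxEig4 (M : TwoQubitMat) : ℝ :=
  if h : M.IsHermitian then Finset.univ.sup' Finset.univ_nonempty h.eigenvalues else 0

def Conc (ρ : TwoQubitMat) : ℝ := max 0 (2 * maxEig4 (Rmat ρ) - (Rmat ρ).trace.re)

def eigMultiset (M : TwoQubitMat) : Multiset ℝ :=
  if h : M.IsHermitian then Finset.univ.val.map h.eigenvalues else 0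

def rhoAB (ψ : Fin 2 → Fin 2 → Fin 2 → ℂ) : TwoQubitMat :=
  fun p q => ∑ l, ψ p.1 p.2 l * (starRingEnd ℂ) (ψ q.1 q.2 l)

def rhoAS (ψ : Fin 2 → Fin 2 → Fin 2 → ℂ) : TwoQubitMat :=
  fun p q => ∑ j, ψ p.1 j p.2 * (starRingEnd ℂ) (ψ q.1 j q.2)

def rhoA (ψ : Fin 2 → Fin 2 → Fin 2 → ℂ) : Matrix (Fin 2) (Fin 2) ℂ :=
  fun i i' => ∑ j, ∑ l, ψ i j l * (starRingEnd ℂ) (ψ i' j l)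


section Aux

def Matrix.PosSemidef.sqrt {m : Type*} [Fintype m] [DecidableEq m] {M : Matrix m m ℂ}
    (h : M.PosSemidef) : Matrix m m ℂ :=
  h.1.eigenvectorUnitary.1 * diagonal ((↑) ∘ Real.sqrt ∘ h.1.eigenvalues) *
    (star h.1.eigenvectorUnitary : Matrix m m ℂ)

lemma Matrix.PosSemidef.posSemidef_sqrt {m : Type*} [Fintype m] [DecidableEq m]
    {M : Matrix m m ℂ} (h : M.PosSemidef) : h.sqrt.PosSemidef := by
  unfold Matrix.PosSemidef.sqrt
  have hD : (diagonal ((↑) ∘ Real.sqrt ∘ h.1.eigenvalues : m → ℂ)).PosSemidef :=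
    Matrix.PosSemidef.diagonal (fun i => by
      show (0 : ℂ) ≤ ((Real.sqrt (h.1.eigenvalues i) : ℝ) : ℂ)
      exact_mod_cast Real.sqrt_nonneg _)
  have := hD.mul_mul_conjTranspose_same (h.1.eigenvectorUnitary : Matrix m m ℂ)
  rwa [← Matrix.star_eq_conjTranspose] at this

lemma Matrix.PosSemidef.sqrt_mul_self {m : Type*} [Fintype m] [DecidableEq m]
    {M : Matrix m m ℂ} (h : M.PosSemidef) : h.sqrt * h.sqrt = M := by
  conv_rhs => rw [h.1.spectral_theorem, Unitary.conjStarAlgAut_apply]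
  unfold Matrix.PosSemidef.sqrt
  have hU : (star h.1.eigenvectorUnitary : Matrix m m ℂ) * (h.1.eigenvectorUnitary : Matrix m m ℂ)
      = 1 := Unitary.coe_star_mul_self _
  simp only [Matrix.mul_assoc]
  rw [← Matrix.mul_assoc (star h.1.eigenvectorUnitary : Matrix m m ℂ), hU, Matrix.one_mul,
    ← Matrix.mul_assoc (diagonal _), Matrix.diagonal_mul_diagonal]
  congr 3
  funext i
  simp only [Function.comp_apply, ← Complex.ofReal_mul,
    Real.mul_self_sqrt (h.eigenvalues_nonneg i)]
  rfl

lemma sigmaY_conjT : sigmaYᴴ = sigmaY := by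
  ext i j
  fin_cases i <;> fin_cases j <;>
    simp [sigmaY, Matrix.conjTranspose_apply]

lemma YY_conjT : (sigmaY ⊗ₖ sigmaY)ᴴ = sigmaY ⊗ₖ sigmaY := by
  ext p q
  obtain ⟨a, b⟩ := p; obtain ⟨c, d⟩ := q
  simp only [Matrix.conjTranspose_apply, Matrix.kroneckerMap_apply, star_mul']
  rw [← Matrix.conjTranspose_apply, ← Matrix.conjTranspose_apply, sigmaY_conjT]

lemma map_conj_of_herm {A : TwoQubitMat} (h : A.IsHermitian) :
    A.map (starRingEnd ℂ) = Aᵀ := by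
  ext i j
  have := congrFun (congrFun h.symm j) i
  simp only [Matrix.conjTranspose_apply] at this
  simpa [Matrix.map_apply, Matrix.transpose_apply] using this.symm

lemma spinFlip_posSemidef {ρ : TwoQubitMat} (h : ρ.PosSemidef) :
    (spinFlip ρ).PosSemidef := by
  rw [spinFlip, map_conj_of_herm h.1]
  nth_rewrite 2 [← YY_conjT]
  exact h.transpose.mul_mul_conjTranspose_same _

lemma spinFlip_rank_le {ρ : TwoQubitMat} (h : ρ.PosSemidef) :
    (spinFlip ρ).rank ≤ ρ.rank := by
  rw [spinFlip, map_conj_of_herm h.1]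
  calc ((sigmaY ⊗ₖ sigmaY) * ρᵀ * (sigmaY ⊗ₖ sigmaY)).rank
      ≤ ((sigmaY ⊗ₖ sigmaY) * ρᵀ).rank := Matrix.rank_mul_le_left _ _
    _ ≤ ρᵀ.rank := Matrix.rank_mul_le_right _ _
    _ = ρ.rank := Matrix.rank_transpose _

lemma trace_eq_sum_eigs {n : Type*} [Fintype n] [DecidableEq n] {A : Matrix n n ℂ}
    (hA : A.IsHermitian) : A.trace = ↑(∑ i, hA.eigenvalues i) := by
  conv_lhs => rw [hA.spectral_theorem, Unitary.conjStarAlgAut_apply]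
  rw [Matrix.trace_mul_cycle]
  rw [show (star (hA.eigenvectorUnitary : Matrix n n ℂ)) * (hA.eigenvectorUnitary : Matrix n n ℂ) = 1 from
    Unitary.coe_star_mul_self _]
  rw [Matrix.one_mul, Matrix.trace_diagonal]
  push_cast
  rfl

lemma trace_sq_eq_sum_sq {n : Type*} [Fintype n] [DecidableEq n] {A : Matrix n n ℂ}
    (hA : A.IsHermitian) : (A * A).trace = ↑(∑ i, hA.eigenvalues i ^ 2) := by
  set U : Matrix n n ℂ := (hA.eigenvectorUnitary : Matrix n n ℂ) with hUdef
  set D : Matrix n n ℂ := Matrix.diagonal (RCLike.ofReal ∘ hA.eigenvalues) with hDdef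
  have hU : star U * U = 1 := Unitary.coe_star_mul_self _
  have cancel : ∀ X : Matrix n n ℂ, star U * (U * X) = X := fun X => by
    rw [← Matrix.mul_assoc, hU, Matrix.one_mul]
  conv_lhs => rw [hA.spectral_theorem, Unitary.conjStarAlgAut_apply]
  simp only [← hUdef, ← hDdef, Matrix.mul_assoc]
  rw [Matrix.trace_mul_comm]
  simp only [Matrix.mul_assoc, cancel]
  rw [Matrix.trace_mul_comm]
  simp only [Matrix.mul_assoc, cancel]
  rw [hDdef, Matrix.diagonal_mul_diagonal, Matrix.trace_diagonal]
  push_cast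
  simp [sq]

lemma key_real {n : Type*} [Fintype n] (e : n → ℝ) (he : ∀ i, 0 ≤ e i) (i₀ : n)
    (hmax : ∀ i, e i ≤ e i₀)
    (hcard : Fintype.card {i // e i ≠ 0} ≤ 2) :
    0 ≤ 2 * e i₀ - ∑ i, e i ∧
      (2 * e i₀ - ∑ i, e i) ^ 2 + (∑ i, e i) ^ 2 = 2 * ∑ i, e i ^ 2 := by
  classical
  rw [Fintype.card_subtype] at hcard
  set s := Finset.univ.filter (fun i => e i ≠ 0) with hs
  have hTs : ∑ i, e i = ∑ i ∈ s, e i := by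
    rw [hs, Finset.sum_filter_ne_zero]
  have hSs : ∑ i, e i ^ 2 = ∑ i ∈ s, e i ^ 2 := by
    refine (Finset.sum_subset (Finset.filter_subset _ _) ?_).symm
    intro x _ hx
    have : e x = 0 := by by_contra h; exact hx (by simp [hs, h])
    simp [this]
  by_cases h0 : e i₀ = 0
  · have hz : ∀ i, e i = 0 := fun i => le_antisymm (h0 ▸ hmax i) (he i)
    simp [hz]
  · have hi₀s : i₀ ∈ s := by simp [hs, h0]
    have hT' : ∑ i ∈ s, e i = e i₀ + ∑ i ∈ s.erase i₀, e i :=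
      (Finset.add_sum_erase s e hi₀s).symm
    have hS' : ∑ i ∈ s, e i ^ 2 = e i₀ ^ 2 + ∑ i ∈ s.erase i₀, e i ^ 2 :=
      (Finset.add_sum_erase s (fun i => e i ^ 2) hi₀s).symm
    have hc1 : (s.erase i₀).card ≤ 1 := by
      have h1 := Finset.card_erase_of_mem hi₀s
      omega
    rcases (s.erase i₀).eq_empty_or_nonempty with hemp | ⟨j, hj⟩
    · rw [hTs, hSs, hT', hS', hemp]
      simp only [Finset.sum_empty, add_zero]
      constructor
      · linarith [he i₀]
      · ring
    · have hsing : s.erase i₀ = {j} :=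
        Finset.eq_singleton_iff_unique_mem.mpr
          ⟨hj, fun b hb => Finset.card_le_one.mp hc1 b hb j hj⟩
      rw [hTs, hSs, hT', hS', hsing]
      simp only [Finset.sum_singleton]
      constructor
      · linarith [hmax j]
      · ring

lemma matSqrt_of_psd {m : Type*} [Fintype m] [DecidableEq m] {M : Matrix m m ℂ}
    (h : M.PosSemidef) : matSqrt M = h.sqrt := by
  rw [matSqrt]
  exact dif_pos h

lemma lemA {ρ : TwoQubitMat} (hρ : ρ.PosSemidef) (hrk : ρ.rank ≤ 2) :
    Conc ρ ^ 2 + CoA ρ ^ 2 = 2 * (ρ * spinFlip ρ).trace.re := by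
  have hsf := spinFlip_posSemidef hρ
  have hs := hρ.posSemidef_sqrt
  have hM : (hρ.sqrt * spinFlip ρ * hρ.sqrt).PosSemidef := by
    have h2 := hsf.mul_mul_conjTranspose_same hρ.sqrt
    rwa [hs.1] at h2
  have hRe : Rmat ρ = hM.sqrt := by
    rw [Rmat, matSqrt_of_psd hρ, matSqrt_of_psd hM]
  have hRpsd : (Rmat ρ).PosSemidef := hRe ▸ hM.posSemidef_sqrt
  have hH : (Rmat ρ).IsHermitian := hRpsd.1
  have hRR : Rmat ρ * Rmat ρ = hρ.sqrt * spinFlip ρ * hρ.sqrt := by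
    rw [hRe]; exact hM.sqrt_mul_self
  have htr2 : (Rmat ρ * Rmat ρ).trace = (ρ * spinFlip ρ).trace := by
    rw [hRR, Matrix.trace_mul_cycle, hρ.sqrt_mul_self]
  set e := hH.eigenvalues with hedef
  have he0 : ∀ i, 0 ≤ e i := hRpsd.eigenvalues_nonneg
  have htrace : (Rmat ρ).trace = ↑(∑ i, e i) := trace_eq_sum_eigs hH
  have htrsq : (Rmat ρ * Rmat ρ).trace = ↑(∑ i, e i ^ 2) := trace_sq_eq_sum_sq hH
  have hrkR : (Rmat ρ).rank ≤ 2 := by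
    have h1 : ((Rmat ρ)ᴴ * Rmat ρ).rank = (Rmat ρ).rank :=
      Matrix.rank_conjTranspose_mul_self _
    rw [hH] at h1
    rw [← h1, hRR]
    calc (hρ.sqrt * spinFlip ρ * hρ.sqrt).rank
        ≤ (hρ.sqrt * spinFlip ρ).rank := Matrix.rank_mul_le_left _ _
      _ ≤ (spinFlip ρ).rank := Matrix.rank_mul_le_right _ _
      _ ≤ ρ.rank := spinFlip_rank_le hρ
      _ ≤ 2 := hrk
  have hcard : Fintype.card {i // e i ≠ 0} ≤ 2 := by
    have h2 := hH.rank_eq_card_non_zero_eigs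
    rw [hedef, ← h2]
    exact hrkR
  obtain ⟨i₀, -, hi₀⟩ := Finset.exists_mem_eq_sup' Finset.univ_nonempty e
  have hmax : ∀ i, e i ≤ e i₀ := fun i => hi₀ ▸ Finset.le_sup' e (Finset.mem_univ i)
  obtain ⟨hge, heq⟩ := key_real e he0 i₀ hmax hcard
  have hCoA : CoA ρ = ∑ i, e i := by
    rw [CoA, htrace, Complex.ofReal_re]
  have hmx : maxEig4 (Rmat ρ) = e i₀ := by
    rw [maxEig4, dif_pos hH, ← hi₀]
  have hConc : Conc ρ = 2 * e i₀ - ∑ i, e i := by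
    rw [Conc, hmx, htrace, Complex.ofReal_re]
    exact max_eq_right hge
  rw [hConc, hCoA, ← htr2, htrsq, Complex.ofReal_re]
  exact heq


def ampAB (ψ : Fin 2 → Fin 2 → Fin 2 → ℂ) : Matrix (Fin 2 × Fin 2) (Fin 2) ℂ :=
  fun p l => ψ p.1 p.2 l

def ampAS (ψ : Fin 2 → Fin 2 → Fin 2 → ℂ) : Matrix (Fin 2 × Fin 2) (Fin 2) ℂ :=
  fun p j => ψ p.1 j p.2

lemma rhoAB_eq (ψ : Fin 2 → Fin 2 → Fin 2 → ℂ) : rhoAB ψ = ampAB ψ * (ampAB ψ)ᴴ := by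
  ext p q
  rw [Matrix.mul_apply]
  exact Finset.sum_congr rfl fun l _ => rfl

lemma rhoAS_eq (ψ : Fin 2 → Fin 2 → Fin 2 → ℂ) : rhoAS ψ = ampAS ψ * (ampAS ψ)ᴴ := by
  ext p q
  rw [Matrix.mul_apply]
  exact Finset.sum_congr rfl fun l _ => rfl

lemma rhoAB_psd (ψ : Fin 2 → Fin 2 → Fin 2 → ℂ) : (rhoAB ψ).PosSemidef := by
  rw [rhoAB_eq]; exact Matrix.posSemidef_self_mul_conjTranspose _

lemma rhoAS_psd (ψ : Fin 2 → Fin 2 → Fin 2 → ℂ) : (rhoAS ψ).PosSemidef := by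
  rw [rhoAS_eq]; exact Matrix.posSemidef_self_mul_conjTranspose _

lemma rhoAB_rank (ψ : Fin 2 → Fin 2 → Fin 2 → ℂ) : (rhoAB ψ).rank ≤ 2 := by
  rw [rhoAB_eq, Matrix.rank_self_mul_conjTranspose]
  simpa using Matrix.rank_le_card_width (ampAB ψ)

lemma rhoAS_rank (ψ : Fin 2 → Fin 2 → Fin 2 → ℂ) : (rhoAS ψ).rank ≤ 2 := by
  rw [rhoAS_eq, Matrix.rank_self_mul_conjTranspose]
  simpa using Matrix.rank_le_card_width (ampAS ψ)

def qsgn : Fin 2 × Fin 2 → ℂ := fun p => ![1, -1] p.1 * ![1, -1] p.2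
def qflip : Fin 2 × Fin 2 → Fin 2 × Fin 2 := fun p => (![1, 0] p.1, ![1, 0] p.2)

lemma spinFlip_apply (ρ : TwoQubitMat) (p q : Fin 2 × Fin 2) :
    spinFlip ρ p q = qsgn p * qsgn q * (starRingEnd ℂ) (ρ (qflip p) (qflip q)) := by
  obtain ⟨a, b⟩ := p; obtain ⟨c, d⟩ := q
  fin_cases a <;> fin_cases b <;> fin_cases c <;> fin_cases d <;>
    simp [spinFlip, qsgn, qflip, Matrix.mul_apply, sigmaY, Matrix.kroneckerMap_apply,
      Fintype.sum_prod_type, Fin.sum_univ_two, Matrix.map_apply]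

set_option maxHeartbeats 1000000 in
lemma polyid (ψ : Fin 2 → Fin 2 → Fin 2 → ℂ) :
    (rhoAB ψ * spinFlip (rhoAB ψ)).trace + (rhoAS ψ * spinFlip (rhoAS ψ)).trace
      = 4 * (rhoA ψ).det := by
  simp only [Matrix.trace, Matrix.diag_apply, Matrix.mul_apply, spinFlip_apply,
    qsgn, qflip, rhoAB, rhoAS, rhoA, map_sum, _root_.map_mul, _root_.map_add,
    RingHomCompTriple.comp_apply, RingHom.id_apply, Complex.conj_conj,
    Matrix.det_fin_two, Fintype.sum_prod_type, Fin.sum_univ_two,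
    Matrix.cons_val_zero, Matrix.cons_val_one, Matrix.head_cons,
    Finset.sum_add_distrib, Finset.mul_sum, Finset.sum_mul]
  ring

end Aux

theorem three_tangle_dual (ψ : Fin 2 → Fin 2 → Fin 2 → ℂ)
    (hψ : ∑ i, ∑ j, ∑ l, Complex.normSq (ψ i j l) = 1) :
    4 * (rhoA ψ).det.re - Conc (rhoAB ψ) ^ 2 - Conc (rhoAS ψ) ^ 2 =
      CoA (rhoAB ψ) ^ 2 + CoA (rhoAS ψ) ^ 2 - 4 * (rhoA ψ).det.re := by
  have h1 := lemA (rhoAB_psd ψ) (rhoAB_rank ψ)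
  have h2 := lemA (rhoAS_psd ψ) (rhoAS_rank ψ)
  have h3 := congrArg Complex.re (polyid ψ)
  have h4 : ((4 : ℂ) * (rhoA ψ).det).re = 4 * (rhoA ψ).det.re := by
    simp [Complex.mul_re]
  rw [Complex.add_re, h4] at h3
  linarith
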